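/- In a partial cube, the Djoković–Winkler relation Θ, defined on edges by ab Θ xy iff d(a,x)+d(b,y) ≠ d(a,y)+d(b,x), is an equivalence relation on the edge set. -/
import Mathlib


open SimpleGraph

/-- A partial cube: a connected graph admitting an isometric embedding into a hypercube,
i.e. an injective map to `{0,1}^n` such that Hamming distance equals graph distance. -/
def IsPartialCube {V : Type} (G : SimpleGraph V) : Prop :=
  G.Connected ∧ ∃ (n : ℕ) (f : V → (Fin n → Bool)),
    Function.Injective f ∧ ∀ u v : V, hammingDist (f u) (f v) = G.dist u v

/-- The Djoković–Winkler relation on (ordered representatives of) edges: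
`ab Θ xy` iff `d(a,x)+d(b,y) ≠ d(a,y)+d(b,x)`. -/
def theta {V : Type} (G : SimpleGraph V) (a b x y : V) : Prop :=
  G.dist a x + G.dist b y ≠ G.dist a y + G.dist b x

private lemma hamming_one {n : ℕ} {g h : Fin n → Bool} (hd : hammingDist g h = 1) :
    ∃ i, g i ≠ h i ∧ ∀ j, j ≠ i → g j = h j := by
  rw [hammingDist, Finset.card_eq_one] at hd
  obtain ⟨i, hi⟩ := hd
  refine ⟨i, ?_, fun j hj => ?_⟩
  · have : i ∈ ({i} : Finset (Fin n)) := Finset.mem_singleton_self i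
    rw [← hi, Finset.mem_filter] at this
    exact this.2
  · by_contra hne
    have : j ∈ ({i} : Finset (Fin n)) := by
      rw [← hi, Finset.mem_filter]; exact ⟨Finset.mem_univ _, hne⟩
    exact hj (Finset.mem_singleton.mp this)

private lemma key {n : ℕ} {g h : Fin n → Bool} {i : Fin n}
    (h1 : g i ≠ h i) (h2 : ∀ j, j ≠ i → g j = h j) (u v : Fin n → Bool) :
    (hammingDist g u + hammingDist h v = hammingDist g v + hammingDist h u) ↔ u i = v i := by
  have card_eq : ∀ p q : Fin n → Bool,
      hammingDist p q = ∑ j : Fin n, (if p j ≠ q j then 1 else 0) := by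
    intro p q
    rw [hammingDist, Finset.card_filter]
  have split : ∀ F : Fin n → ℕ,
      ∑ j : Fin n, F j = (∑ j ∈ Finset.univ.erase i, F j) + F i := by
    intro F
    exact (Finset.sum_erase_add _ _ (Finset.mem_univ i)).symm
  rw [card_eq g u, card_eq h v, card_eq g v, card_eq h u,
    split fun j => if g j ≠ u j then 1 else 0,
    split fun j => if h j ≠ v j then 1 else 0,
    split fun j => if g j ≠ v j then 1 else 0,
    split fun j => if h j ≠ u j then 1 else 0]
  have e1 : (∑ j ∈ Finset.univ.erase i, if g j ≠ u j then 1 else 0) =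
      ∑ j ∈ Finset.univ.erase i, if h j ≠ u j then 1 else 0 := by
    apply Finset.sum_congr rfl
    intro j hj
    rw [h2 j (Finset.ne_of_mem_erase hj)]
  have e2 : (∑ j ∈ Finset.univ.erase i, if h j ≠ v j then 1 else 0) =
      ∑ j ∈ Finset.univ.erase i, if g j ≠ v j then 1 else 0 := by
    apply Finset.sum_congr rfl
    intro j hj
    rw [h2 j (Finset.ne_of_mem_erase hj)]
  rw [e1, e2]
  constructor
  · intro hsum
    revert h1 hsum
    cases g i <;> cases h i <;> cases u i <;> cases v i <;> simp <;> omega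
  · intro huv
    revert h1
    cases g i <;> cases h i <;> rw [huv] <;> cases v i <;> simp <;> omega

/-- In a partial cube, Θ is an equivalence relation on the edge set. -/
theorem theta_equivalence {V : Type} (G : SimpleGraph V) (hG : IsPartialCube G) :
    (∀ a b : V, G.Adj a b → theta G a b a b) ∧
    (∀ a b x y : V, G.Adj a b → G.Adj x y → theta G a b x y → theta G x y a b) ∧
    (∀ a b x y p q : V, G.Adj a b → G.Adj x y → G.Adj p q →
      theta G a b x y → theta G x y p q → theta G a b p q) := by
  obtain ⟨hconn, n, f, hinj, hd⟩ := hG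
  have coord : ∀ a b : V, G.Adj a b →
      ∃ i, f a i ≠ f b i ∧ ∀ j, j ≠ i → f a j = f b j := by
    intro a b hab
    exact hamming_one (by rw [hd, SimpleGraph.dist_eq_one_iff_adj.mpr hab])
  have thetaIff : ∀ (a b x y : V) (i j : Fin n),
      (f a i ≠ f b i ∧ ∀ k, k ≠ i → f a k = f b k) →
      (f x j ≠ f y j ∧ ∀ k, k ≠ j → f x k = f y k) →
      (theta G a b x y ↔ i = j) := by
    rintro a b x y i j ⟨h1, h2⟩ ⟨h3, h4⟩
    unfold theta
    rw [← hd a x, ← hd b y, ← hd a y, ← hd b x, Ne, key h1 h2 (f x) (f y)]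
    constructor
    · intro hne
      by_contra hij
      exact hne (h4 i hij)
    · intro hij
      subst hij
      exact h3
  refine ⟨?_, ?_, ?_⟩
  · intro a b hab
    obtain ⟨i, hi⟩ := coord a b hab
    exact (thetaIff a b a b i i hi hi).mpr rfl
  · intro a b x y hab hxy ht
    obtain ⟨i, hi⟩ := coord a b hab
    obtain ⟨j, hj⟩ := coord x y hxy
    exact (thetaIff x y a b j i hj hi).mpr ((thetaIff a b x y i j hi hj).mp ht).symm
  · intro a b x y p q hab hxy hpq h1 h2
    obtain ⟨i, hi⟩ := coord a b hab
    obtain ⟨j, hj⟩ := coord x y hxy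
    obtain ⟨k, hk⟩ := coord p q hpq
    exact (thetaIff a b p q i k hi hk).mpr
      (((thetaIff a b x y i j hi hj).mp h1).trans ((thetaIff x y p q j k hj hk).mp h2))
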